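/- For a positive integer $k$ and nonnegative integer $m$, the generating-series version of the depth-one interpolated element satisfies: $h_m((k);t) = f_0(k+1,m)\,(k+m)$ in $\mathcal{I}^t$, where $h_m(\boldsymbol{k};t)$ is defined by $h_m(\boldsymbol{k};t) = \sum_{l=1}^{r}\sum_{e_1+\cdots+e_l+e_1'+\cdots+e_l'=m} t^{r-l+e_1+\cdots+e_l} \sum_{\boldsymbol{k}=(\boldsymbol{k}_1,\dots,\boldsymbol{k}_l)} \prod_{l'=1}^{l}\binom{\mathrm{wt}(\boldsymbol{k}_{l'})-\mathrm{dep}(\boldsymbol{k}_{l'})+e_{l'}+\delta_{l',1}-2}{e_{l'}}\big((\mathrm{wt}(\boldsymbol{k}_1),\dots,\mathrm{wt}(\boldsymbol{k}_l))\oplus\boldsymbol{e}\oplus\boldsymbol{e}'\big)$. In particular, $h_m((1);t) = (1+m)$, i.e., the single index $(m+1)$ with coefficient $1$. -/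

import Mathlib

open Polynomial Finset

/-- The polynomial `f_i(k,e) ∈ ℚ[t]` of Hirose–Murahara–Ono. -/
noncomputable def fHMO (i k e : ℕ) : Polynomial ℚ :=
  ∑ j ∈ Finset.range (e - i + 1),
    (((e - j).choose i : ℚ) * ((k + e - i - 2).choose j : ℚ)) •
      (X ^ j * (1 - X) ^ (e - i - j))

/-- `h_m(𝐤;t)` of Hirose–Murahara–Ono, an element of the free `ℚ[t]`-module on indices
(realized as `List ℕ →₀ ℚ[t]`).  The sum over decompositions `𝐤 = (𝐤_1,…,𝐤_l)` into
consecutive nonempty blocks is realized via `Composition K.length`. -/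
noncomputable def hHMO (m : ℕ) (K : List ℕ) : (List ℕ) →₀ Polynomial ℚ :=
  ∑ c : Composition K.length,
    ∑ p ∈ Finset.HasAntidiagonal.antidiagonal m,
      ∑ e ∈ Finset.Nat.antidiagonalTuple c.length p.1,
        ∑ e' ∈ Finset.Nat.antidiagonalTuple c.length p.2,
          Finsupp.single
            (List.ofFn fun j : Fin c.length =>
              ((K.splitWrtComposition c).getD j []).sum + e j + e' j)
            (X ^ (K.length - c.length + p.1) *
              ∏ j : Fin c.length,
                (((((K.splitWrtComposition c).getD j []).sum
                      - ((K.splitWrtComposition c).getD j []).length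
                      + e j + (if (j : ℕ) = 0 then 1 else 0) - 2).choose (e j) : ℕ) :
                  Polynomial ℚ))

lemma hHMO_single_red (k m : ℕ) :
    hHMO m [k] = ∑ p ∈ Finset.HasAntidiagonal.antidiagonal m,
      Finsupp.single [k + p.1 + p.2]
        (X ^ p.1 * ((k - 1 + p.1 + 1 - 2).choose p.1 : Polynomial ℚ)) := by
  letI : Unique (Composition [k].length) :=
    ⟨⟨Composition.ones 1⟩, fun c =>
      Composition.eq_ones_iff_le_length.2 (c.length_pos_of_pos one_pos)⟩
  unfold hHMO
  rw [Fintype.sum_unique]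
  show (∑ p ∈ Finset.HasAntidiagonal.antidiagonal m,
      ∑ e ∈ Finset.Nat.antidiagonalTuple 1 p.1,
        ∑ e' ∈ Finset.Nat.antidiagonalTuple 1 p.2,
          Finsupp.single
            (List.ofFn fun j : Fin 1 => ([[k]].getD j []).sum + e j + e' j)
            (X ^ (1 - 1 + p.1) *
              ∏ j : Fin 1,
                (((([[k]].getD j []).sum - ([[k]].getD j []).length
                      + e j + (if (j : ℕ) = 0 then 1 else 0) - 2).choose (e j) : ℕ) :
                  Polynomial ℚ))) = _
  simp only [Finset.Nat.antidiagonalTuple_one, Finset.sum_singleton]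
  refine Finset.sum_congr rfl fun p _ => ?_
  simp [List.ofFn_succ, Fin.prod_univ_one, Matrix.cons_val_zero]

lemma Srec (n m : ℕ) :
    ∑ j ∈ range (m+2), ((n+1).choose j : Polynomial ℚ) * (X^j * (1-X)^(m+1-j))
      = (∑ j ∈ range (m+1), (n.choose j : Polynomial ℚ) * (X^j * (1-X)^(m-j)))
        + (n.choose (m+1) : Polynomial ℚ) * X^(m+1) := by
  rw [Finset.sum_range_succ' (fun j => ((n+1).choose j : Polynomial ℚ) * (X^j * (1-X)^(m+1-j)))]
  have h1 : ∀ i, ((n+1).choose (i+1) : Polynomial ℚ) * (X^(i+1) * (1-X)^(m+1-(i+1)))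
      = (n.choose i : Polynomial ℚ) * (X^(i+1) * (1-X)^(m-i))
        + (n.choose (i+1) : Polynomial ℚ) * (X^(i+1) * (1-X)^(m-i)) := by
    intro i
    rw [Nat.succ_sub_succ, Nat.choose_succ_succ, Nat.cast_add, add_mul]
  rw [Finset.sum_congr rfl (fun i _ => h1 i), Finset.sum_add_distrib]
  have h2 : (∑ i ∈ range (m+1), (n.choose (i+1) : Polynomial ℚ) * (X^(i+1) * (1-X)^(m-i)))
      + ((n+1).choose 0 : Polynomial ℚ) * (X^0 * (1-X)^(m+1-0))
      = ∑ j ∈ range (m+2), (n.choose j : Polynomial ℚ) * (X^j * (1-X)^(m+1-j)) := by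
    rw [Finset.sum_range_succ' (fun j => (n.choose j : Polynomial ℚ) * (X^j * (1-X)^(m+1-j)))]
    simp [Nat.succ_sub_succ]
  rw [add_assoc, h2,
    Finset.sum_range_succ (fun j => ((n.choose j : Polynomial ℚ)) * (X^j * (1-X)^(m+1-j))) (m+1),
    ← add_assoc]
  congr 1
  · rw [← Finset.sum_add_distrib]
    refine Finset.sum_congr rfl fun j hj => ?_
    rw [Finset.mem_range] at hj
    rw [show m+1-j = (m-j)+1 from by omega]
    ring
  · simp

lemma key (a m : ℕ) :
    ∑ j ∈ range (m+1), ((a+m).choose j : Polynomial ℚ) * (X^j * (1-X)^(m-j))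
      = ∑ j ∈ range (m+1), ((a+j-1).choose j : Polynomial ℚ) * X^j := by
  induction m with
  | zero => simp
  | succ m ih =>
      rw [show a + (m+1) = (a+m)+1 from rfl, Srec, ih,
        Finset.sum_range_succ (fun j => (((a+j-1).choose j : ℕ) : Polynomial ℚ) * X^j) (m+1),
        show a+(m+1)-1 = a+m from by omega]

lemma fHMO_eq (k m : ℕ) (hk : 1 ≤ k) :
    fHMO 0 (k+1) m = ∑ j ∈ range (m+1),
      X^j * (((k - 1 + j + 1 - 2).choose j : ℕ) : Polynomial ℚ) := by
  unfold fHMO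
  simp only [Nat.sub_zero, Nat.choose_zero_right, Nat.cast_one, one_mul,
    Polynomial.smul_eq_C_mul, Polynomial.C_eq_natCast]
  have h : k + 1 + m - 2 = (k-1) + m := by omega
  calc ∑ j ∈ range (m+1), ((k+1+m-2).choose j : Polynomial ℚ) * (X^j * (1-X)^(m-j))
      = ∑ j ∈ range (m+1), (((k-1)+m).choose j : Polynomial ℚ) * (X^j * (1-X)^(m-j)) := by
        rw [h]
    _ = ∑ j ∈ range (m+1), (((k-1)+j-1).choose j : Polynomial ℚ) * X^j := key (k-1) m
    _ = ∑ j ∈ range (m+1), X^j * (((k - 1 + j + 1 - 2).choose j : ℕ) : Polynomial ℚ) := by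
        refine Finset.sum_congr rfl fun j _ => ?_
        rw [show k - 1 + j + 1 - 2 = (k-1)+j-1 from by omega, mul_comm]

theorem stmt17 (k m : ℕ) (hk : 1 ≤ k) :
    hHMO m [k] = Finsupp.single [k + m] (fHMO 0 (k + 1) m)
      ∧ hHMO m [1] = Finsupp.single [1 + m] 1 := by
  have main : ∀ k : ℕ, 1 ≤ k → hHMO m [k] = Finsupp.single [k + m] (fHMO 0 (k + 1) m) := by
    intro k hk
    rw [hHMO_single_red, fHMO_eq k m hk]
    rw [Finsupp.single_finset_sum]
    rw [Finset.Nat.sum_antidiagonal_eq_sum_range_succ_mk]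
    refine Finset.sum_congr rfl fun j hj => ?_
    rw [Finset.mem_range] at hj
    rw [show k + j + (m - j) = k + m from by omega]
  refine ⟨main k hk, ?_⟩
  rw [main 1 le_rfl]
  congr 1
  rw [fHMO_eq 1 m le_rfl]
  rw [Finset.sum_eq_single 0]
  · simp
  · intro j _ hj
    rw [show 1 - 1 + j + 1 - 2 = j - 1 from by omega,
      Nat.choose_eq_zero_of_lt (by omega)]
    simp
  · simp
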